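/- Let {a_n} be a positive decreasing sequence and define shift-like maps S_n(z₁,…,z_k) = (P(z₁) + a_n z_k, a_n z₁, …, a_n z_{k-1}) on C^k, k ≥ 2 (for k = 2, S_n(z₁,z₂) = (P(z₁) + a_n z₂, a_n z₁)), where P is a polynomial with P(0) = 0, P'(0) = 0. Suppose z ∈ C^k satisfies: at some step ñ, |π₂(S(ñ)(z))| > R while |π_i(S(n)(z))| ≤ R for all 2 ≤ i ≤ k and all n < ñ, where R is such that |P(ζ) + w| ≥ 2|ζ| whenever |ζ| ≥ R and |w| ≤ R. Then |π₁(S(ñ−1)(z))| > R, i.e., S(ñ−1)(z) lies in the set V_R⁺ = {z : |z_j| ≤ max{|z₁|, R} for all j, |z₁| > R}, and consequently ‖S(n)(z)‖ → ∞. -/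

import Mathlib

open Filter

/-- escape to infinity for shift-like maps
`S_n(z₁,…,z_k) = (P(z₁) + a_n z_k, a_n z₁, …, a_n z_{k-1})` on `ℂ^k`, `k = m + 2 ≥ 2`.
If at step `ñ = N + 1` the second coordinate of the orbit exceeds `R` while all
coordinates of index `≥ 2` were `≤ R` before, then `|π₁(S(N)(z))| > R`, the point
`S(N)(z)` lies in the escape region `V_R⁺`, and `‖S(n)(z)‖ → ∞`. -/
theorem stmt14 {m : ℕ} (P : Polynomial ℂ)
    (hP0 : P.coeff 0 = 0) (hP1 : P.coeff 1 = 0) (hPdeg : 2 ≤ P.natDegree)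
    (a : ℕ → ℝ) (ha : ∀ n, 0 < a n) (hadec : ∀ n, a (n + 1) ≤ a n) (ha1 : ∀ n, a n ≤ 1)
    (R : ℝ) (hR0 : 0 < R)
    (hR : ∀ ζ w : ℂ, R ≤ ‖ζ‖ → ‖w‖ ≤ max R ‖ζ‖ → 2 * ‖ζ‖ ≤ ‖P.eval ζ + w‖)
    (S : ℕ → (Fin (m + 2) → ℂ) → (Fin (m + 2) → ℂ))
    (hS0 : ∀ n z, S n z 0 = P.eval (z 0) + (a n : ℂ) * z (Fin.last (m + 1)))
    (hSsucc : ∀ n z (j : Fin (m + 1)), S n z j.succ = (a n : ℂ) * z j.castSucc)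
    (Sc : ℕ → (Fin (m + 2) → ℂ) → (Fin (m + 2) → ℂ))
    (hSc0 : ∀ z, Sc 0 z = S 0 z) (hScS : ∀ n z, Sc (n + 1) z = S (n + 1) (Sc n z))
    (z : Fin (m + 2) → ℂ) (N : ℕ)
    (hesc : R < ‖Sc (N + 1) z 1‖)
    (hbefore : ∀ n ≤ N, ∀ j : Fin (m + 1), ‖Sc n z j.succ‖ ≤ R) :
    R < ‖Sc N z 0‖ ∧
    (∀ j : Fin (m + 2), ‖Sc N z j‖ ≤ max ‖Sc N z 0‖ R) ∧
    Tendsto (fun n => ‖Sc n z‖) atTop atTop := by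
  have h10 : ((0 : Fin (m+1)).succ : Fin (m+2)) = 1 := by
    ext; simp
  have hc0 : ((0 : Fin (m+1)).castSucc : Fin (m+2)) = 0 := rfl
  have hbase0 : R < ‖Sc N z 0‖ := by
    have h := hSsucc (N+1) (Sc N z) 0
    rw [hc0, h10] at h
    have heq : ‖Sc (N+1) z 1‖ = a (N+1) * ‖Sc N z 0‖ := by
      rw [hScS, h, norm_mul, Complex.norm_real, Real.norm_of_nonneg (ha _).le]
    calc R < ‖Sc (N+1) z 1‖ := hesc
      _ = a (N+1) * ‖Sc N z 0‖ := heq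
      _ ≤ 1 * ‖Sc N z 0‖ := mul_le_mul_of_nonneg_right (ha1 _) (norm_nonneg _)
      _ = ‖Sc N z 0‖ := one_mul _
  have hbase : ∀ j : Fin (m+2), ‖Sc N z j‖ ≤ max R ‖Sc N z 0‖ := by
    intro j
    induction j using Fin.cases with
    | zero => exact le_max_right _ _
    | succ j => exact le_trans (hbefore N le_rfl j) (le_max_left _ _)
  have key : ∀ n, R < ‖Sc n z 0‖ → (∀ j, ‖Sc n z j‖ ≤ max R ‖Sc n z 0‖) →
      2 * ‖Sc n z 0‖ ≤ ‖Sc (n+1) z 0‖ ∧ R < ‖Sc (n+1) z 0‖ ∧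
      ∀ j, ‖Sc (n+1) z j‖ ≤ max R ‖Sc (n+1) z 0‖ := by
    intro n hn hj
    have hw : ‖((a (n+1) : ℂ)) * Sc n z (Fin.last (m+1))‖ ≤ max R ‖Sc n z 0‖ := by
      rw [norm_mul, Complex.norm_real, Real.norm_of_nonneg (ha _).le]
      calc a (n+1) * ‖Sc n z (Fin.last (m+1))‖
          ≤ 1 * ‖Sc n z (Fin.last (m+1))‖ :=
            mul_le_mul_of_nonneg_right (ha1 _) (norm_nonneg _)
        _ = ‖Sc n z (Fin.last (m+1))‖ := one_mul _
        _ ≤ max R ‖Sc n z 0‖ := hj _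
    have h0 : Sc (n+1) z 0 = P.eval (Sc n z 0) + (a (n+1) : ℂ) * Sc n z (Fin.last (m+1)) := by
      rw [hScS, hS0]
    have hdouble : 2 * ‖Sc n z 0‖ ≤ ‖Sc (n+1) z 0‖ := by
      rw [h0]; exact hR _ _ hn.le hw
    have hmono : ‖Sc n z 0‖ ≤ ‖Sc (n+1) z 0‖ := by
      have := norm_nonneg (Sc n z 0); linarith
    refine ⟨hdouble, lt_of_lt_of_le hn hmono, ?_⟩
    intro j
    induction j using Fin.cases with
    | zero => exact le_max_right _ _
    | succ j =>
      rw [hScS, hSsucc, norm_mul, Complex.norm_real, Real.norm_of_nonneg (ha _).le]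
      calc a (n+1) * ‖Sc n z j.castSucc‖
          ≤ 1 * ‖Sc n z j.castSucc‖ := mul_le_mul_of_nonneg_right (ha1 _) (norm_nonneg _)
        _ ≤ max R ‖Sc n z 0‖ := by rw [one_mul]; exact hj _
        _ ≤ max R ‖S (n+1) (Sc n z) 0‖ := by
            rw [← hScS]; exact max_le_max le_rfl hmono
  have inv : ∀ k, 2^k * ‖Sc N z 0‖ ≤ ‖Sc (N+k) z 0‖ ∧ R < ‖Sc (N+k) z 0‖ ∧
      ∀ j, ‖Sc (N+k) z j‖ ≤ max R ‖Sc (N+k) z 0‖ := by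
    intro k
    induction k with
    | zero => exact ⟨by simp, hbase0, hbase⟩
    | succ k ih =>
      obtain ⟨hg, hR', hj⟩ := ih
      obtain ⟨hd, hR'', hj'⟩ := key _ hR' hj
      refine ⟨?_, hR'', hj'⟩
      calc 2^(k+1) * ‖Sc N z 0‖ = 2 * (2^k * ‖Sc N z 0‖) := by ring
        _ ≤ 2 * ‖Sc (N+k) z 0‖ := by linarith
        _ ≤ ‖Sc (N+k+1) z 0‖ := hd
  refine ⟨hbase0, fun j => (hbase j).trans_eq (max_comm R _), ?_⟩
  rw [tendsto_atTop_atTop]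
  intro b
  obtain ⟨k, hk⟩ := exists_nat_gt (b / R)
  refine ⟨N + k, fun n hn => ?_⟩
  obtain ⟨t, rfl⟩ := Nat.exists_eq_add_of_le (le_trans (Nat.le_add_right N k) hn)
  have hkt : k ≤ t := by omega
  have hk2 : (k : ℝ) ≤ 2 ^ t := by
    calc (k : ℝ) ≤ 2 ^ k := by exact_mod_cast (Nat.lt_two_pow_self (n := k)).le
      _ ≤ 2 ^ t := pow_le_pow_right₀ one_le_two hkt
  have hb : b < (k : ℝ) * R := (div_lt_iff₀ hR0).mp hk
  have h1 : (k : ℝ) * R ≤ 2 ^ t * R := mul_le_mul_of_nonneg_right hk2 hR0.le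
  have h2 : (2 : ℝ) ^ t * R ≤ 2 ^ t * ‖Sc N z 0‖ :=
    mul_le_mul_of_nonneg_left hbase0.le (by positivity)
  have h3 := (inv t).1
  have h4 : ‖Sc (N + t) z 0‖ ≤ ‖Sc (N + t) z‖ := norm_le_pi_norm (Sc (N + t) z) 0
  linarith
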